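/- arXiv:1003.4704 — 5 statements merged into one kernel-verified Lean document; each statement's English description precedes it below -/
import Mathlib

section
/- Let p be an odd prime and let λ be a strict partition. Suppose the strict partition μ is obtained from λ by a finite sequence of p-bar removals (each of type 1, type 2, or type 3), of which exactly a are of type 3, and suppose that no p-bar removal of any type applies to μ. Then there exists a sign ε ∈ {1, −1} such that 2^a · h̄_{λ,p'} ≡ ε · h̄_{μ,p'} (mod p). -/
/-- The multiset of bar lengths of a strict partition, given by its set of parts `X`:
for each part `a`, the row contributes `({1, …, a} ∪ {a + b : b ∈ X, b < a}) \ {a - b : b ∈ X, b < a}`. -/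
def barLengths (X : Finset ℕ) : Multiset ℕ :=
  X.val.bind fun a =>
    (((Finset.Icc 1 a) ∪ (X.filter (· < a)).image (fun b => a + b)) \
      ((X.filter (· < a)).image (fun b => a - b))).val

/-- The product of all bar lengths of the strict partition with parts `X`
that are not divisible by `p`. -/
def barProd' (p : ℕ) (X : Finset ℕ) : ℕ :=
  (Multiset.filter (fun l => ¬ p ∣ l) (barLengths X)).prod

/-- Removal of a `p`-bar of type 1: a part `a > p` with `a - p` not a part is replaced
by `a - p`. -/
def Type1Removal (p : ℕ) (X Y : Finset ℕ) : Prop :=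
  ∃ a ∈ X, p < a ∧ a - p ∉ X ∧ Y = insert (a - p) (X.erase a)

/-- Removal of a `p`-bar of type 2: the part `p` is removed. -/
def Type2Removal (p : ℕ) (X Y : Finset ℕ) : Prop :=
  p ∈ X ∧ Y = X.erase p

/-- Removal of a `p`-bar of type 3: two distinct parts `a`, `b` with `a + b = p`
are removed. -/
def Type3Removal (p : ℕ) (X Y : Finset ℕ) : Prop :=
  ∃ a ∈ X, ∃ b ∈ X, a ≠ b ∧ a + b = p ∧ Y = (X.erase a).erase b

/-- `BarRemovalChain p X Y a` : `Y` is obtained from `X` by a finite sequence of `p`-bar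
removals (of types 1, 2 or 3) of which exactly `a` are of type 3. -/
inductive BarRemovalChain (p : ℕ) : Finset ℕ → Finset ℕ → ℕ → Prop
  | refl (X) : BarRemovalChain p X X 0
  | step1 {X Y Z : Finset ℕ} {a : ℕ} :
      Type1Removal p X Y → BarRemovalChain p Y Z a → BarRemovalChain p X Z a
  | step2 {X Y Z : Finset ℕ} {a : ℕ} :
      Type2Removal p X Y → BarRemovalChain p Y Z a → BarRemovalChain p X Z a
  | step3 {X Y Z : Finset ℕ} {a : ℕ} :
      Type3Removal p X Y → BarRemovalChain p Y Z a → BarRemovalChain p X Z (a + 1)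


set_option linter.unusedSectionVars false
open Finset

section Aux
variable (p : ℕ) [Fact p.Prime]

noncomputable def g (x : ℕ) : ZMod p := if p ∣ x then 1 else (x : ZMod p)

lemma g_ne_zero (x : ℕ) : g p x ≠ 0 := by
  unfold g
  split
  · exact one_ne_zero
  · intro h
    exact ‹¬ p ∣ x› ((ZMod.natCast_eq_zero_iff x p).1 h)

lemma g_add_p (x : ℕ) : g p (x + p) = g p x := by
  unfold g
  have h : p ∣ x + p ↔ p ∣ x := by
    constructor
    · intro h; exact (Nat.dvd_add_iff_left (dvd_refl p)).mpr h
    · intro h; exact Nat.dvd_add h (dvd_refl p)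
  rw [if_congr h rfl rfl]
  split
  · rfl
  · push_cast [ZMod.natCast_self]
    ring

lemma not_dvd_of_lt {x : ℕ} (hx : 0 < x) (hxp : x < p) : ¬ p ∣ x := by
  intro h
  exact absurd (Nat.le_of_dvd hx h) (not_le.2 hxp)

lemma g_eq_cast {x : ℕ} (hx : 0 < x) (hxp : x < p) : g p x = (x : ZMod p) :=
  if_neg (not_dvd_of_lt p hx hxp)

lemma g_neg {x y : ℕ} (hxy : x + y = p) (hx : 0 < x) (hy : 0 < y) : g p x = - g p y := by
  rw [g_eq_cast p hx (by omega), g_eq_cast p hy (by omega)]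
  have : ((x + y : ℕ) : ZMod p) = 0 := by rw [hxy]; exact ZMod.natCast_self p
  push_cast at this
  linear_combination this

end Aux
section Aux2
variable (p : ℕ) [Fact p.Prime]

noncomputable def A (n : ℕ) : ZMod p := ∏ x ∈ Finset.Icc 1 n, g p x

lemma p_pos : 0 < p := (Fact.out : p.Prime).pos

lemma A_succ (n : ℕ) : A p (n + 1) = A p n * g p (n + 1) := by
  unfold A
  rw [← Finset.Ico_add_one_right_eq_Icc, ← Finset.Ico_add_one_right_eq_Icc,
    Finset.prod_Ico_succ_top (by omega)]

lemma A_base : A p (p - 1) = -1 := by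
  unfold A
  have h1 : ∀ x ∈ Finset.Icc 1 (p - 1), g p x = (x : ZMod p) := by
    intro x hx
    simp only [Finset.mem_Icc] at hx
    exact g_eq_cast p (by omega) (by have := p_pos p; omega)
  rw [Finset.prod_congr rfl h1]
  have h2 : (∏ x ∈ Finset.Icc 1 (p - 1), (x : ZMod p)) = (((p-1).factorial : ℕ) : ZMod p) := by
    rw [← Nat.cast_prod]
    congr 1
    rw [← Finset.Ico_add_one_right_eq_Icc]
    exact Finset.prod_Ico_id_eq_factorial (p - 1)
  rw [h2, ZMod.wilsons_lemma]

lemma A_p : A p p = -1 := by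
  have hp := p_pos p
  have h0 : A p p = A p (p - 1) * g p p := by
    unfold A
    rw [← Finset.Ico_add_one_right_eq_Icc, ← Finset.Ico_add_one_right_eq_Icc]
    have : Finset.Ico 1 (p + 1) = Finset.Ico 1 (p - 1 + 1 + 1) := by congr 1; omega
    rw [this, Finset.prod_Ico_succ_top (by omega)]
    congr 2
    omega
  have h1 : g p p = 1 := by unfold g; rw [if_pos (dvd_refl p)]
  rw [h0, h1, mul_one, A_base]

-- product of g over p consecutive integers is -1
lemma prod_Ico_g (n : ℕ) : ∏ x ∈ Finset.Ico (n + 1) (n + 1 + p), g p x = -1 := by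
  induction n with
  | zero =>
    have hp := p_pos p
    have : Finset.Ico 1 (1 + p) = Finset.Icc 1 p := by
      rw [← Finset.Ico_add_one_right_eq_Icc]
      congr 1
      omega
    rw [this]
    exact A_p p
  | succ n ih =>
    have hp := p_pos p
    have h1 : ∏ x ∈ Finset.Ico (n + 2) (n + 2 + p), g p x
        = (∏ x ∈ Finset.Ico (n + 2) (n + 1 + p), g p x) * g p (n + 1 + p) := by
      have : n + 2 + p = (n + 1 + p) + 1 := by omega
      rw [this, Finset.prod_Ico_succ_top (by omega)]
    have h2 : (∏ x ∈ Finset.Ico (n + 1) (n + 1 + p), g p x)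
        = g p (n + 1) * ∏ x ∈ Finset.Ico (n + 2) (n + 1 + p), g p x := by
      rw [Finset.prod_eq_prod_Ico_succ_bot (by omega)]
    rw [h1, g_add_p, mul_comm, ← h2, ih]

lemma A_add_p (m : ℕ) : A p (m + p) = - A p m := by
  unfold A
  have h1 : Finset.Icc 1 (m + p) = Finset.Ioc 0 (m + p) := by
    rw [← Finset.Icc_add_one_left_eq_Ioc]; rfl
  have h2 : Finset.Icc 1 m = Finset.Ioc 0 m := by rw [← Finset.Icc_add_one_left_eq_Ioc]; rfl
  rw [h1, h2, ← Finset.prod_Ioc_consecutive (g p) (Nat.zero_le m) (by omega)]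
  have h3 : Finset.Ioc m (m + p) = Finset.Ico (m + 1) (m + 1 + p) := by
    ext x
    simp only [Finset.mem_Ioc, Finset.mem_Ico]
    omega
  rw [h3, prod_Ico_g]
  ring

lemma A_pair : ∀ a : ℕ, a < p → A p a * A p (p - 1 - a) = -(-1) ^ a := by
  intro a
  induction a with
  | zero =>
    intro _
    simp only [Nat.sub_zero, pow_zero]
    have : A p 0 = 1 := by unfold A; simp
    rw [this, one_mul, A_base]
  | succ a ih =>
    intro ha
    have hp := p_pos p
    have h1 : A p (a + 1) = A p a * g p (a + 1) := A_succ p a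
    have h2 : p - 1 - a = (p - 1 - (a + 1)) + 1 := by omega
    have h3 : A p (p - 1 - a) = A p (p - 1 - (a + 1)) * g p (p - 1 - a) := by
      rw [h2]; exact A_succ p _
    have h4 : g p (a + 1) = - g p (p - 1 - a) := g_neg p (by omega) (by omega) (by omega)
    have h5 := ih (by omega)
    have h6 : g p (p - 1 - a) ≠ 0 := g_ne_zero p _
    rw [h3] at h5
    apply mul_right_cancel₀ h6
    rw [h1, h4]
    linear_combination (- g p (p - 1 - a)) * h5
end Aux2
section Aux3
variable (p : ℕ) [Fact p.Prime]

noncomputable def kk' (a b : ℕ) : ZMod p :=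
  if b < a then g p (a + b) * (g p (a - b))⁻¹ else 1

noncomputable def kk (a b : ℕ) : ZMod p := kk' p a b * kk' p b a

lemma kk'_ne_zero (a b : ℕ) : kk' p a b ≠ 0 := by
  unfold kk'
  split
  · exact mul_ne_zero (g_ne_zero p _) (inv_ne_zero (g_ne_zero p _))
  · exact one_ne_zero

lemma kk_ne_zero (a b : ℕ) : kk p a b ≠ 0 :=
  mul_ne_zero (kk'_ne_zero p a b) (kk'_ne_zero p b a)

lemma kk_comm (a b : ℕ) : kk p a b = kk p b a := mul_comm _ _

lemma kk_eval {a b : ℕ} (h : b < a) : kk p a b = g p (a + b) * (g p (a - b))⁻¹ := by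
  unfold kk kk'
  rw [if_pos h, if_neg (by omega), mul_one]

lemma kk'_self (a : ℕ) : kk' p a a = 1 := by
  unfold kk'
  rw [if_neg (lt_irrefl a)]

noncomputable def Q (X : Finset ℕ) : ZMod p :=
  (∏ a ∈ X, A p a) * ∏ x ∈ X, ∏ y ∈ X, kk' p x y

lemma Q_insert {a : ℕ} {S : Finset ℕ} (ha : a ∉ S) :
    Q p (insert a S) = A p a * (∏ b ∈ S, kk p a b) * Q p S := by
  unfold Q
  rw [Finset.prod_insert ha, Finset.prod_insert ha, Finset.prod_insert ha]
  have h1 : ∀ x ∈ S, (∏ y ∈ insert a S, kk' p x y) = kk' p x a * ∏ y ∈ S, kk' p x y :=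
    fun x _ => Finset.prod_insert ha
  rw [Finset.prod_congr rfl h1, Finset.prod_mul_distrib, kk'_self]
  have h2 : (∏ b ∈ S, kk p a b) = (∏ b ∈ S, kk' p a b) * ∏ b ∈ S, kk' p b a := by
    rw [← Finset.prod_mul_distrib]
    rfl
  rw [h2]
  ring

end Aux3
section Aux4
variable (p : ℕ) [Fact p.Prime]

lemma filter_prod_eq_map_g (m : Multiset ℕ) :
    ((Multiset.filter (fun l => ¬ p ∣ l) m).prod : ZMod p) = (m.map (g p)).prod := by
  induction m using Multiset.induction with
  | empty => simp
  | cons a s ih =>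
    by_cases h : p ∣ a
    · rw [Multiset.filter_cons_of_neg _ (by simpa using h), Multiset.map_cons,
        Multiset.prod_cons, ih]
      have : g p a = 1 := if_pos h
      rw [this, one_mul]
    · rw [Multiset.filter_cons_of_pos _ (by simpa using h), Multiset.map_cons,
        Multiset.prod_cons, Multiset.prod_cons, Nat.cast_mul, ih]
      have : g p a = (a : ZMod p) := if_neg h
      rw [this]

/-- The row set of part `a`. -/
def rowSet (X : Finset ℕ) (a : ℕ) : Finset ℕ :=
  ((Finset.Icc 1 a) ∪ (X.filter (· < a)).image (fun b => a + b)) \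
      ((X.filter (· < a)).image (fun b => a - b))

lemma row_prod (X : Finset ℕ) (hX : 0 ∉ X) {a : ℕ} (ha : a ∈ X) :
    (∏ x ∈ rowSet X a, g p x) = A p a * ∏ b ∈ X, kk' p a b := by
  have hmem : ∀ b ∈ X, 1 ≤ b := by
    intro b hb
    rcases Nat.eq_zero_or_pos b with h | h
    · exact absurd (h ▸ hb) hX
    · exact h
  set F := X.filter (· < a) with hF
  have hFm : ∀ b ∈ F, 1 ≤ b ∧ b < a := by
    intro b hb
    rw [hF, Finset.mem_filter] at hb
    exact ⟨hmem b hb.1, hb.2⟩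
  -- diffs ⊆ Icc ⊆ union
  have hsub : F.image (fun b => a - b) ⊆ Finset.Icc 1 a ∪ F.image (fun b => a + b) := by
    intro x hx
    rw [Finset.mem_image] at hx
    obtain ⟨b, hb, rfl⟩ := hx
    have := hFm b hb
    exact Finset.mem_union_left _ (Finset.mem_Icc.2 (by omega))
  have hdisj : Disjoint (Finset.Icc 1 a) (F.image (fun b => a + b)) := by
    rw [Finset.disjoint_right]
    intro x hx hx2
    rw [Finset.mem_image] at hx
    obtain ⟨b, hb, rfl⟩ := hx
    have := hFm b hb
    rw [Finset.mem_Icc] at hx2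
    omega
  have hD : (∏ x ∈ F.image (fun b => a - b), g p x) = ∏ b ∈ F, g p (a - b) := by
    apply Finset.prod_image
    intro b hb c hc h
    have h1 := hFm b hb
    have h2 := hFm c hc
    simp only at h; omega
  have hSm : (∏ x ∈ F.image (fun b => a + b), g p x) = ∏ b ∈ F, g p (a + b) := by
    apply Finset.prod_image
    intro b hb c hc h
    simp only at h; omega
  have hDne : (∏ b ∈ F, g p (a - b)) ≠ 0 := Finset.prod_ne_zero_iff.2 (fun b _ => g_ne_zero p _)
  have key := Finset.prod_sdiff (f := g p) hsub
  rw [Finset.prod_union hdisj, hD, hSm] at key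
  have hrow : (∏ x ∈ rowSet X a, g p x)
      = (A p a * ∏ b ∈ F, g p (a + b)) * (∏ b ∈ F, g p (a - b))⁻¹ := by
    unfold rowSet
    rw [← hF]
    field_simp
    rw [key]
    unfold A
    rfl
  rw [hrow]
  have : (∏ b ∈ X, kk' p a b) = ∏ b ∈ F, g p (a + b) * (g p (a - b))⁻¹ := by
    rw [hF, Finset.prod_filter]
    apply Finset.prod_congr rfl
    intro b _
    unfold kk'
    split <;> rfl
  rw [this, Finset.prod_mul_distrib, ← Finset.prod_inv_distrib]
  ring

lemma Qeq (X : Finset ℕ) (hX : 0 ∉ X) : (barProd' p X : ZMod p) = Q p X := by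
  unfold barProd'
  rw [filter_prod_eq_map_g]
  have h1 : barLengths X = X.val.bind (fun a => (rowSet X a).val) := rfl
  rw [h1, Multiset.map_bind, Multiset.prod_bind]
  have h2 : (Multiset.map (fun a => (Multiset.map (g p) (rowSet X a).val).prod) X.val).prod
      = ∏ a ∈ X, ∏ x ∈ rowSet X a, g p x := rfl
  rw [h2, Finset.prod_congr rfl (fun a ha => row_prod p X hX ha)]
  unfold Q
  rw [Finset.prod_mul_distrib]

end Aux4
section Aux5
variable (p : ℕ) [Fact p.Prime]

lemma kk_shift {a b : ℕ} (hpa : p < a) (hb : 1 ≤ b) (hba : b ≠ a) (hbap : b ≠ a - p) :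
    kk p a b * (kk p (a - p) b)⁻¹ = 1 ∨ kk p a b * (kk p (a - p) b)⁻¹ = -1 := by
  rcases (show b < a - p ∨ (a - p < b ∧ b < a) ∨ a < b by omega) with h | ⟨h1, h2⟩ | h
  · left
    have e1 : a + b = ((a - p) + b) + p := by omega
    have e2 : a - b = ((a - p) - b) + p := by omega
    rw [kk_eval p (by omega), kk_eval p h, e1, e2, g_add_p, g_add_p]
    exact mul_inv_cancel₀ (mul_ne_zero (g_ne_zero p _) (inv_ne_zero (g_ne_zero p _)))
  · right
    have e1 : a + b = (b + (a - p)) + p := by omega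
    have e3 : g p (a - b) = - g p (b - (a - p)) := g_neg p (by omega) (by omega) (by omega)
    rw [kk_eval p h2, kk_comm, kk_eval p h1, e1, g_add_p, e3]
    have n1 := g_ne_zero p (b + (a - p))
    have n2 := g_ne_zero p (b - (a - p))
    field_simp
    try ring
  · left
    have e1 : b + a = (b + (a - p)) + p := by omega
    have e2 : b - (a - p) = (b - a) + p := by omega
    rw [kk_comm, kk_eval p (by omega), kk_comm, kk_eval p (by omega), e1, e2, g_add_p, g_add_p]
    exact mul_inv_cancel₀ (mul_ne_zero (g_ne_zero p _) (inv_ne_zero (g_ne_zero p _)))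

lemma kk_p {b : ℕ} (hb : 1 ≤ b) (hbp : b ≠ p) :
    kk p p b = 1 ∨ kk p p b = -1 := by
  have hp := p_pos p
  rcases (show b < p ∨ p < b by omega) with h | h
  · right
    have e1 : p + b = b + p := by omega
    have e2 : g p b = - g p (p - b) := g_neg p (by omega) hb (by omega)
    rw [kk_eval p h, e1, g_add_p, e2]
    have n2 := g_ne_zero p (p - b)
    field_simp
    try ring
  · left
    have e1 : b + p = (b - p) + p + p := by omega
    rw [kk_comm, kk_eval p h, e1, g_add_p, g_add_p]
    exact mul_inv_cancel₀ (g_ne_zero p _)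

lemma kk_three {a b c : ℕ} (hb : 1 ≤ b) (hba : b < a) (hab : a + b = p)
    (hc : 1 ≤ c) (hca : c ≠ a) (hcb : c ≠ b) :
    kk p a c * kk p b c = 1 ∨ kk p a c * kk p b c = -1 := by
  rcases (show c < b ∨ (b < c ∧ c < a) ∨ a < c by omega) with h | ⟨h1, h2⟩ | h
  · left
    have e1 : g p (b + c) = - g p (a - c) := g_neg p (by omega) (by omega) (by omega)
    have e2 : g p (b - c) = - g p (a + c) := g_neg p (by omega) (by omega) (by omega)
    rw [kk_eval p (by omega), kk_eval p h, e1, e2]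
    have n1 := g_ne_zero p (a + c)
    have n2 := g_ne_zero p (a - c)
    field_simp
    try ring
  · right
    have e1 : a + c = (c - b) + p := by omega
    have e2 : g p (c + b) = - g p (a - c) := g_neg p (by omega) (by omega) (by omega)
    rw [kk_eval p h2, kk_comm, kk_eval p h1, e1, g_add_p, e2]
    have n1 := g_ne_zero p (c - b)
    have n2 := g_ne_zero p (a - c)
    field_simp
    try ring
  · left
    have e1 : c + a = (c - b) + p := by omega
    have e2 : c + b = (c - a) + p := by omega
    rw [kk_comm, kk_eval p (by omega), kk_comm p b c, kk_eval p (by omega), e1, e2,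
      g_add_p, g_add_p]
    have n1 := g_ne_zero p (c - b)
    have n2 := g_ne_zero p (c - a)
    field_simp
    try ring

lemma type3const {a b : ℕ} (hb : 1 ≤ b) (hba : b < a) (hab : a + b = p) :
    2 * (A p a * A p b * kk p a b) = (-1 : ZMod p) ^ a := by
  have hap : a < p := by omega
  have hpair := A_pair p a hap
  have hb' : b = (p - 1 - a) + 1 := by omega
  have hAb : A p b = A p (p - 1 - a) * g p ((p - 1 - a) + 1) := by
    rw [hb']; exact A_succ p _
  have hg1 : g p ((p - 1 - a) + 1) = - (a : ZMod p) := by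
    have h1 : (p - 1 - a) + 1 = p - a := by omega
    rw [h1, g_eq_cast p (by omega) (by omega)]
    have h2 := congrArg (Nat.cast : ℕ → ZMod p) (show (p - a) + a = p by omega)
    push_cast [ZMod.natCast_self] at h2
    linear_combination h2
  have hga : g p (a + b) = 1 := by
    unfold g; rw [if_pos (by rw [hab])]
  have hgd : g p (a - b) = 2 * (a : ZMod p) := by
    rw [g_eq_cast p (by omega) (by omega)]
    have h2 := congrArg (Nat.cast : ℕ → ZMod p) (show (a - b) + p = a + a by omega)
    push_cast [ZMod.natCast_self] at h2
    linear_combination h2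
  have hne : 2 * (a : ZMod p) ≠ 0 := hgd ▸ g_ne_zero p _
  rw [kk_eval p hba, hga, hAb, hg1, hgd, one_mul]
  have ha0 : (a : ZMod p) ≠ 0 := right_ne_zero_of_mul hne
  have h20 : (2 : ZMod p) ≠ 0 := left_ne_zero_of_mul hne
  field_simp
  linear_combination (-1 : ZMod p) * hpair

end Aux5
section Aux6
variable (p : ℕ) [Fact p.Prime]

lemma pm_mul {M : Type*} [Monoid M] [HasDistribNeg M] {x y : M}
    (hx : x = 1 ∨ x = -1) (hy : y = 1 ∨ y = -1) : x * y = 1 ∨ x * y = -1 := by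
  rcases hx with rfl | rfl <;> rcases hy with rfl | rfl <;> simp

lemma pm_prod {S : Finset ℕ} {f : ℕ → ZMod p}
    (h : ∀ b ∈ S, f b = 1 ∨ f b = -1) : S.prod f = 1 ∨ S.prod f = -1 :=
  Finset.prod_induction f (fun x => x = 1 ∨ x = -1)
    (fun _ _ ha hb => pm_mul ha hb) (Or.inl rfl) h

lemma mem_pos {X : Finset ℕ} (hX : 0 ∉ X) : ∀ b ∈ X, 1 ≤ b := by
  intro b hb
  rcases Nat.eq_zero_or_pos b with h | h
  · exact absurd (h ▸ hb) hX
  · exact h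

lemma step1_Q {X Y : Finset ℕ} (h : Type1Removal p X Y) (hX : 0 ∉ X) :
    ∃ ε : ZMod p, (ε = 1 ∨ ε = -1) ∧ Q p X = ε * Q p Y := by
  obtain ⟨a, haX, hpa, hnot, rfl⟩ := h
  set S := X.erase a with hS
  have haS : a ∉ S := Finset.notMem_erase a X
  have hXeq : X = insert a S := (Finset.insert_erase haX).symm
  have hapS : a - p ∉ S := fun hmem => hnot (Finset.mem_of_mem_erase hmem)
  have hQX : Q p X = A p a * (∏ b ∈ S, kk p a b) * Q p S := by
    conv_lhs => rw [hXeq]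
    exact Q_insert p haS
  have hQY : Q p (insert (a - p) S) = A p (a - p) * (∏ b ∈ S, kk p (a - p) b) * Q p S :=
    Q_insert p hapS
  have hr : ∀ b ∈ S, kk p a b * (kk p (a - p) b)⁻¹ = 1 ∨
      kk p a b * (kk p (a - p) b)⁻¹ = -1 := by
    intro b hb
    exact kk_shift p hpa (mem_pos hX b (Finset.mem_of_mem_erase hb))
      (Finset.ne_of_mem_erase hb) (fun e => hapS (e ▸ hb))
  have hprod := pm_prod p hr
  refine ⟨-(∏ b ∈ S, kk p a b * (kk p (a - p) b)⁻¹), by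
    rcases hprod with h|h <;> rw [h] <;> simp, ?_⟩
  have hAa : A p a = - A p (a - p) := by
    have e : a = (a - p) + p := by omega
    conv_lhs => rw [e]
    exact A_add_p p _
  have hk : (∏ b ∈ S, kk p a b)
      = (∏ b ∈ S, kk p a b * (kk p (a - p) b)⁻¹) * ∏ b ∈ S, kk p (a - p) b := by
    rw [← Finset.prod_mul_distrib]
    apply Finset.prod_congr rfl
    intro b _
    rw [mul_assoc, inv_mul_cancel₀ (kk_ne_zero p (a - p) b), mul_one]
  rw [hQX, hQY, hAa, hk]
  ring

lemma step2_Q {X Y : Finset ℕ} (h : Type2Removal p X Y) (hX : 0 ∉ X) :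
    ∃ ε : ZMod p, (ε = 1 ∨ ε = -1) ∧ Q p X = ε * Q p Y := by
  obtain ⟨hpX, rfl⟩ := h
  set S := X.erase p with hS
  have hpS : p ∉ S := Finset.notMem_erase p X
  have hXeq : X = insert p S := (Finset.insert_erase hpX).symm
  have hQX : Q p X = A p p * (∏ b ∈ S, kk p p b) * Q p S := by
    conv_lhs => rw [hXeq]
    exact Q_insert p hpS
  have hr : ∀ b ∈ S, kk p p b = 1 ∨ kk p p b = -1 := fun b hb =>
    kk_p p (mem_pos hX b (Finset.mem_of_mem_erase hb)) (Finset.ne_of_mem_erase hb)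
  have hprod := pm_prod p hr
  refine ⟨-(∏ b ∈ S, kk p p b), by rcases hprod with h|h <;> rw [h] <;> simp, ?_⟩
  rw [hQX, A_p]
  ring

lemma step3_aux {X : Finset ℕ} {a b : ℕ} (haX : a ∈ X) (hbX : b ∈ X) (hba : b < a)
    (hsum : a + b = p) (hX : 0 ∉ X) :
    ∃ ε : ZMod p, (ε = 1 ∨ ε = -1) ∧ 2 * Q p X = ε * Q p ((X.erase a).erase b) := by
  set S := (X.erase a).erase b with hS
  have hb1 : 1 ≤ b := mem_pos hX b hbX
  have hbT : b ∈ X.erase a := Finset.mem_erase.2 ⟨by omega, hbX⟩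
  have hT : X.erase a = insert b S := (Finset.insert_erase hbT).symm
  have hXeq : X = insert a (insert b S) := by
    rw [← hT, Finset.insert_erase haX]
  have haIn : a ∉ insert b S := by
    rw [← hT]
    exact Finset.notMem_erase a X
  have hbS : b ∉ S := Finset.notMem_erase b _
  have hQX : Q p X = A p a * (∏ c ∈ insert b S, kk p a c) * Q p (insert b S) := by
    conv_lhs => rw [hXeq]
    exact Q_insert p haIn
  have hQT : Q p (insert b S) = A p b * (∏ c ∈ S, kk p b c) * Q p S := Q_insert p hbS
  have hins : (∏ c ∈ insert b S, kk p a c) = kk p a b * ∏ c ∈ S, kk p a c :=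
    Finset.prod_insert hbS
  have hr : ∀ c ∈ S, kk p a c * kk p b c = 1 ∨ kk p a c * kk p b c = -1 := by
    intro c hc
    have hcX : c ∈ X := Finset.mem_of_mem_erase (Finset.mem_of_mem_erase hc)
    exact kk_three p hb1 hba hsum (mem_pos hX c hcX)
      (Finset.ne_of_mem_erase (Finset.mem_of_mem_erase hc)) (Finset.ne_of_mem_erase hc)
  have hprod := pm_prod p hr
  have hpow : ((-1 : ZMod p) ^ a = 1 ∨ (-1 : ZMod p) ^ a = -1) := neg_one_pow_eq_or _ a
  refine ⟨(-1 : ZMod p) ^ a * ∏ c ∈ S, kk p a c * kk p b c, pm_mul hpow hprod, ?_⟩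
  have hδ := type3const p hb1 hba hsum
  have hsplit : (∏ c ∈ S, kk p a c * kk p b c)
      = (∏ c ∈ S, kk p a c) * ∏ c ∈ S, kk p b c := Finset.prod_mul_distrib
  rw [hQX, hQT, hins, hsplit]
  linear_combination ((∏ c ∈ S, kk p a c) * (∏ c ∈ S, kk p b c) * Q p S) * hδ

lemma step3_Q {X Y : Finset ℕ} (h : Type3Removal p X Y) (hX : 0 ∉ X) :
    ∃ ε : ZMod p, (ε = 1 ∨ ε = -1) ∧ 2 * Q p X = ε * Q p Y := by
  obtain ⟨a, haX, b, hbX, hab, hsum, rfl⟩ := h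
  rcases lt_or_gt_of_ne hab with h1 | h1
  · rw [Finset.erase_right_comm]
    exact step3_aux p hbX haX h1 (by omega) hX
  · exact step3_aux p haX hbX h1 hsum hX

lemma t1_zero {X Y : Finset ℕ} (h : Type1Removal p X Y) (hX : 0 ∉ X) : 0 ∉ Y := by
  obtain ⟨a, _, hpa, _, rfl⟩ := h
  intro h0
  rcases Finset.mem_insert.1 h0 with h1 | h1
  · omega
  · exact hX (Finset.mem_of_mem_erase h1)

lemma t2_zero {X Y : Finset ℕ} (h : Type2Removal p X Y) (hX : 0 ∉ X) : 0 ∉ Y := by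
  obtain ⟨_, rfl⟩ := h
  exact fun h0 => hX (Finset.mem_of_mem_erase h0)

lemma t3_zero {X Y : Finset ℕ} (h : Type3Removal p X Y) (hX : 0 ∉ X) : 0 ∉ Y := by
  obtain ⟨a, _, b, _, _, _, rfl⟩ := h
  exact fun h0 => hX (Finset.mem_of_mem_erase (Finset.mem_of_mem_erase h0))

lemma pm_mul_int {x y : ℤ} (hx : x = 1 ∨ x = -1) (hy : y = 1 ∨ y = -1) :
    x * y = 1 ∨ x * y = -1 := pm_mul hx hy

lemma to_int {ε : ZMod p} (h : ε = 1 ∨ ε = -1) :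
    ∃ ε' : ℤ, (ε' = 1 ∨ ε' = -1) ∧ (ε' : ZMod p) = ε := by
  rcases h with rfl | rfl
  · exact ⟨1, Or.inl rfl, by push_cast; ring⟩
  · exact ⟨-1, Or.inr rfl, by push_cast; ring⟩

lemma chain_Q {X Y : Finset ℕ} {a : ℕ} (hchain : BarRemovalChain p X Y a) :
    0 ∉ X → ∃ ε : ℤ, (ε = 1 ∨ ε = -1) ∧
      (2 : ZMod p) ^ a * Q p X = (ε : ZMod p) * Q p Y := by
  induction hchain with
  | refl X =>
    intro _
    exact ⟨1, Or.inl rfl, by push_cast; ring⟩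
  | step1 h _ ih =>
    intro hX
    obtain ⟨ε₁, hε₁, e1⟩ := step1_Q p h hX
    obtain ⟨ε₁', hε₁', he₁⟩ := to_int p hε₁
    obtain ⟨ε₂, hε₂, e2⟩ := ih (t1_zero p h hX)
    refine ⟨ε₁' * ε₂, pm_mul_int hε₁' hε₂, ?_⟩
    rw [e1, ← he₁]
    push_cast
    linear_combination ((ε₁' : ZMod p)) * e2
  | step2 h _ ih =>
    intro hX
    obtain ⟨ε₁, hε₁, e1⟩ := step2_Q p h hX
    obtain ⟨ε₁', hε₁', he₁⟩ := to_int p hε₁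
    obtain ⟨ε₂, hε₂, e2⟩ := ih (t2_zero p h hX)
    refine ⟨ε₁' * ε₂, pm_mul_int hε₁' hε₂, ?_⟩
    rw [e1, ← he₁]
    push_cast
    linear_combination ((ε₁' : ZMod p)) * e2
  | step3 h _ ih =>
    intro hX
    obtain ⟨ε₁, hε₁, e1⟩ := step3_Q p h hX
    obtain ⟨ε₁', hε₁', he₁⟩ := to_int p hε₁
    obtain ⟨ε₂, hε₂, e2⟩ := ih (t3_zero p h hX)
    refine ⟨ε₁' * ε₂, pm_mul_int hε₁' hε₂, ?_⟩
    rw [← he₁] at e1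
    push_cast
    linear_combination (2 ^ ‹_› : ZMod p) * e1 + ((ε₁' : ZMod p)) * e2

end Aux6

theorem stmt0 (p : ℕ) (hp : p.Prime) (hodd : Odd p)
    (X Y : Finset ℕ) (hX : 0 ∉ X) (hY : 0 ∉ Y) (a : ℕ)
    (hchain : BarRemovalChain p X Y a)
    (hY1 : ¬ ∃ Z, Type1Removal p Y Z)
    (hY2 : ¬ ∃ Z, Type2Removal p Y Z)
    (hY3 : ¬ ∃ Z, Type3Removal p Y Z) :
    ∃ ε : ℤ, (ε = 1 ∨ ε = -1) ∧
      2 ^ a * (barProd' p X : ℤ) ≡ ε * (barProd' p Y : ℤ) [ZMOD p] := by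
  haveI : Fact p.Prime := ⟨hp⟩
  obtain ⟨ε, hε, heq⟩ := chain_Q p hchain hX
  refine ⟨ε, hε, ?_⟩
  rw [← ZMod.intCast_eq_intCast_iff]
  push_cast
  rw [Qeq p X hX, Qeq p Y hY]
  exact heq
end

section
/- Let p be an odd prime and let λ be a strict partition having a part a with a > p such that a − p is not a part of λ. Let μ be the strict partition whose parts are those of λ with the part a replaced by a − p (a p-bar removal of type 1). Then there exists a sign ε ∈ {1, −1} such that h̄_{λ,p'} ≡ ε · h̄_{μ,p'} (mod p). -/
namespace BarAux
open Finset
variable (p : ℕ)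

/-- square-or-one function on `ZMod p`. -/
def G (x : ZMod p) : ZMod p := if x = 0 then 1 else x ^ 2

def g (l : ℕ) : ZMod p := G p (l : ZMod p)

lemma G_neg (x : ZMod p) : G p (-x) = G p x := by
  simp [G, neg_eq_zero, neg_sq]

lemma G_ne_zero [Fact p.Prime] (x : ZMod p) : G p x ≠ 0 := by
  unfold G
  split
  · exact one_ne_zero
  · exact pow_ne_zero _ ‹_›

lemma g_congr {l l' : ℕ} (h : (l : ZMod p) = (l' : ZMod p)) : g p l = g p l' := by
  simp [g, h]

/-- product of g over p consecutive integers is 1 -/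
lemma prod_Ico_g [hp : Fact p.Prime] (n : ℕ) : ∏ l ∈ Ico n (n + p), g p l = 1 := by
  induction n with
  | zero =>
    have hp1 : 1 ≤ p := hp.out.one_lt.le
    rw [zero_add]
    have h0 : ∏ l ∈ Ico 0 p, g p l = g p 0 * ∏ l ∈ Ico 1 p, g p l :=
      Finset.prod_eq_prod_Ico_succ_bot hp.out.pos _
    have hg0 : g p 0 = 1 := by simp [g, G]
    have hstep : ∀ l ∈ Ico 1 p, g p l = ((l : ZMod p)) ^ 2 := by
      intro l hl
      simp only [mem_Ico] at hl
      have : ¬ (p ∣ l) := Nat.not_dvd_of_pos_of_lt (by omega) hl.2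
      have : (l : ZMod p) ≠ 0 := by
        rw [Ne, ZMod.natCast_eq_zero_iff]; exact this
      simp [g, G, this]
    rw [h0, hg0, one_mul, Finset.prod_congr rfl hstep, Finset.prod_pow]
    have : ∏ l ∈ Ico 1 p, (l : ZMod p) = ((Nat.factorial (p-1) : ℕ) : ZMod p) := by
      rw [← Nat.cast_prod]
      congr 1
      have : p = (p - 1) + 1 := by omega
      rw [this, Finset.prod_Ico_id_eq_factorial]
      simp
    rw [this, ZMod.wilsons_lemma]
    ring
  | succ n ih =>
    have h1 : ∏ l ∈ Ico n (n + p), g p l = g p n * ∏ l ∈ Ico (n+1) (n + p), g p l :=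
      Finset.prod_eq_prod_Ico_succ_bot (by have := hp.out.pos; omega) _
    have h2 : ∏ l ∈ Ico (n+1) (n+1 + p), g p l = (∏ l ∈ Ico (n+1) (n + p), g p l) * g p (n + p) := by
      have : n + 1 + p = (n + p) + 1 := by omega
      rw [this, Finset.prod_Ico_succ_top (by have := hp.out.pos; omega : n+1 ≤ n+p)]
    have h3 : g p (n + p) = g p n := by
      apply g_congr; push_cast [ZMod.natCast_self]; ring
    rw [h2, h3]
    rw [h1] at ih
    rw [mul_comm] at ih
    rw [mul_comm] at ih
    linear_combination ih


/-- the row finset for part `b` -/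
def row (X : Finset ℕ) (b : ℕ) : Finset ℕ :=
  ((Finset.Icc 1 b) ∪ (X.filter (· < b)).image (fun c => b + c)) \
    ((X.filter (· < b)).image (fun c => b - c))

lemma row_prod [Fact p.Prime] (X : Finset ℕ) (hX : 0 ∉ X) (b : ℕ) :
    ∏ l ∈ row X b, g p l =
      (∏ l ∈ Finset.Icc 1 b, g p l) *
        ∏ c ∈ X.filter (· < b), (g p (b + c) * (g p (b - c))⁻¹) := by
  classical
  set C := X.filter (· < b) with hC
  have hCmem : ∀ c ∈ C, 0 < c ∧ c < b := by
    intro c hc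
    simp only [hC, mem_filter] at hc
    exact ⟨Nat.pos_of_ne_zero (fun h => hX (h ▸ hc.1)), hc.2⟩
  have hsub : C.image (fun c => b - c) ⊆ (Finset.Icc 1 b) ∪ C.image (fun c => b + c) := by
    intro x hx
    simp only [mem_image] at hx
    obtain ⟨c, hc, rfl⟩ := hx
    have := hCmem c hc
    exact mem_union_left _ (by simp [mem_Icc]; omega)
  have hdisj : Disjoint (Finset.Icc 1 b) (C.image (fun c => b + c)) := by
    rw [Finset.disjoint_right]
    intro x hx hx'
    simp only [mem_image] at hx
    obtain ⟨c, hc, rfl⟩ := hx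
    have := hCmem c hc
    simp only [mem_Icc] at hx'
    omega
  have hinj1 : Set.InjOn (fun c => b + c) C := by
    intro x _ y _ h
    simp only [add_right_inj] at h
    exact h
  have hinj2 : Set.InjOn (fun c => b - c) C := by
    intro x hx y hy h
    have hx' := hCmem x hx
    have hy' := hCmem y hy
    simp only at h
    omega
  have hsd := Finset.prod_sdiff (f := g p) hsub
  have ht : ∏ l ∈ (Finset.Icc 1 b) ∪ C.image (fun c => b + c), g p l
      = (∏ l ∈ Finset.Icc 1 b, g p l) * ∏ c ∈ C, g p (b + c) := by
    rw [Finset.prod_union hdisj, Finset.prod_image hinj1]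
  have hs : ∏ l ∈ C.image (fun c => b - c), g p l = ∏ c ∈ C, g p (b - c) :=
    Finset.prod_image hinj2
  have hne : ∏ c ∈ C, g p (b - c) ≠ 0 :=
    Finset.prod_ne_zero_iff.mpr (fun c _ => G_ne_zero p _)
  rw [ht, hs] at hsd
  have hrow : row X b = (Finset.Icc 1 b ∪ C.image (fun c => b + c)) \ C.image (fun c => b - c) := by
    simp [row, hC]
  rw [hrow, Finset.prod_mul_distrib]
  rw [Finset.prod_inv_distrib, ← mul_assoc, eq_mul_inv_iff_mul_eq₀ hne]
  exact hsd


lemma barProd_sq [Fact p.Prime] (X : Finset ℕ) :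
    ((barProd' p X : ℕ) : ZMod p) ^ 2 = ((barLengths X).map (g p)).prod := by
  classical
  set M := barLengths X with hM
  have h2 : ((Multiset.filter (fun a => ¬¬ p ∣ a) M).map (g p)).prod = 1 := by
    apply Multiset.prod_eq_one
    intro x hx
    rw [Multiset.mem_map] at hx
    obtain ⟨l, hl, rfl⟩ := hx
    rw [Multiset.mem_filter] at hl
    have : (l : ZMod p) = 0 := (ZMod.natCast_eq_zero_iff l p).mpr (not_not.mp hl.2)
    simp [g, G, this]
  rw [barProd', Nat.cast_multiset_prod, ← Multiset.prod_map_pow]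
  conv_rhs => rw [← Multiset.filter_add_not (fun l => ¬ p ∣ l) M]
  rw [Multiset.map_add, Multiset.prod_add, h2, mul_one]
  congr 1
  apply Multiset.map_congr rfl
  intro l hl
  rw [Multiset.mem_filter] at hl
  have : (l : ZMod p) ≠ 0 := by
    rw [Ne, ZMod.natCast_eq_zero_iff]; exact hl.2
  simp [g, G, this]


lemma barLengths_eq (X : Finset ℕ) :
    barLengths X = X.val.bind (fun b => (row X b).val) := rfl

lemma main_formula [Fact p.Prime] (X : Finset ℕ) (hX : 0 ∉ X) :
    ((barProd' p X : ℕ) : ZMod p) ^ 2 =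
      (∏ b ∈ X, ∏ l ∈ Finset.Icc 1 b, g p l) *
        ∏ b ∈ X, ∏ c ∈ X.filter (· < b), (g p (b + c) * (g p (b - c))⁻¹) := by
  classical
  rw [barProd_sq, barLengths_eq, Multiset.map_bind, Multiset.prod_bind]
  have : ∀ b ∈ X.val, ((row X b).val.map (g p)).prod
      = (∏ l ∈ Finset.Icc 1 b, g p l) * ∏ c ∈ X.filter (· < b), (g p (b + c) * (g p (b - c))⁻¹) := by
    intro b _
    rw [← Finset.prod_eq_multiset_prod]
    exact row_prod p X hX b
  rw [Multiset.map_congr rfl this, ← Finset.prod_eq_multiset_prod, Finset.prod_mul_distrib]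


lemma W_eq [Fact p.Prime] (X : Finset ℕ) (a : ℕ) (ha : a ∈ X) (hap : p < a)
    (hnot : a - p ∉ X) :
    ∏ b ∈ X, ∏ l ∈ Finset.Icc 1 b, g p l
      = ∏ b ∈ insert (a - p) (X.erase a), ∏ l ∈ Finset.Icc 1 b, g p l := by
  classical
  set Q : ℕ → ZMod p := fun b => ∏ l ∈ Finset.Icc 1 b, g p l with hQ
  have h1 : ∏ b ∈ X, Q b = Q a * ∏ b ∈ X.erase a, Q b :=
    (Finset.mul_prod_erase X Q ha).symm
  have h2 : ∏ b ∈ insert (a - p) (X.erase a), Q b = Q (a - p) * ∏ b ∈ X.erase a, Q b :=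
    Finset.prod_insert (fun h => hnot (Finset.mem_of_mem_erase h))
  have key : Q a = Q (a - p) := by
    have hIcc : ∀ n : ℕ, Finset.Icc 1 n = Finset.Ioc 0 n := by
      intro n; exact Finset.Icc_add_one_left_eq_Ioc 0 n
    have hsplit : (∏ l ∈ Finset.Ioc 0 (a-p), g p l) * ∏ l ∈ Finset.Ioc (a-p) a, g p l
        = ∏ l ∈ Finset.Ioc 0 a, g p l :=
      Finset.prod_Ioc_consecutive _ (Nat.zero_le _) (by omega)
    have hmid : ∏ l ∈ Finset.Ioc (a-p) a, g p l = 1 := by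
      have : Finset.Ioc (a-p) a = Finset.Ico (a-p+1) ((a-p+1) + p) := by
        rw [← Finset.Icc_add_one_left_eq_Ioc, ← Finset.Ico_add_one_right_eq_Icc]
        congr 1
        omega
      rw [this, prod_Ico_g]
    rw [hQ]
    simp only [hIcc]
    rw [← hsplit, hmid, mul_one]
  rw [h1, h2, key]


lemma g_add_p (m : ℕ) : g p (m + p) = g p m := by
  apply g_congr; push_cast [ZMod.natCast_self]; ring

lemma g_sub_p {m : ℕ} (h : p ≤ m) : g p (m - p) = g p m := by
  apply g_congr; rw [Nat.cast_sub h]; simp [ZMod.natCast_self]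

lemma g_compl {x y : ℕ} (h : x + y = p) : g p x = g p y := by
  have hc : (x : ZMod p) = -(y : ZMod p) := by
    have := congrArg (Nat.cast : ℕ → ZMod p) h
    push_cast at this
    rw [ZMod.natCast_self] at this
    linear_combination this
  simp only [g]
  rw [hc, G_neg]

lemma P_eq [Fact p.Prime] (X : Finset ℕ) (a : ℕ) (ha : a ∈ X) (hap : p < a)
    (hnot : a - p ∉ X) :
    ∏ b ∈ X, ∏ c ∈ X.filter (· < b), (g p (b + c) * (g p (b - c))⁻¹)
      = ∏ b ∈ insert (a - p) (X.erase a),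
          ∏ c ∈ (insert (a - p) (X.erase a)).filter (· < b), (g p (b + c) * (g p (b - c))⁻¹) := by
  classical
  have hp0 : 0 < p := (‹Fact p.Prime›).out.pos
  set μ := insert (a - p) (X.erase a) with hμ
  have haμ : a ∉ μ := by
    simp only [hμ, Finset.mem_insert, Finset.mem_erase]
    push_neg
    exact ⟨by omega, fun h => (h rfl).elim⟩
  have hconv : ∀ Y : Finset ℕ,
      ∏ b ∈ Y, ∏ c ∈ Y.filter (· < b), (g p (b + c) * (g p (b - c))⁻¹)
      = ∏ q ∈ (Y ×ˢ Y).filter (fun q => q.2 < q.1), (g p (q.1 + q.2) * (g p (q.1 - q.2))⁻¹) := by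
    intro Y
    rw [Finset.prod_filter, Finset.prod_product]
    refine Finset.prod_congr rfl fun b _ => ?_
    rw [Finset.prod_filter]
  rw [hconv X, hconv μ]
  set r : ℕ → ℕ := fun x => if x = a then a - p else x with hr
  set s' : ℕ → ℕ := fun x => if x = a - p then a else x with hs'
  set srt : ℕ × ℕ → ℕ × ℕ := fun q => if q.1 < q.2 then (q.2, q.1) else q with hsrt
  have srt_lt : ∀ u v : ℕ, v < u → srt (u, v) = (u, v) := by
    intro u v h; simp only [hsrt]; rw [if_neg (by omega)]
  have srt_gt : ∀ u v : ℕ, u < v → srt (u, v) = (v, u) := by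
    intro u v h; simp only [hsrt]; rw [if_pos h]
  have r_eq : r a = a - p := by simp [hr]
  have r_ne : ∀ x, x ≠ a → r x = x := by intro x h; simp [hr, h]
  have s_eq : s' (a - p) = a := by simp [hs']
  have s_ne : ∀ x, x ≠ a - p → s' x = x := by intro x h; simp [hs', h]
  have hr_mem : ∀ x ∈ X, r x ∈ μ := by
    intro x hx
    by_cases h : x = a
    · rw [h, r_eq]; exact Finset.mem_insert_self _ _
    · rw [r_ne x h]; exact Finset.mem_insert_of_mem (Finset.mem_erase.mpr ⟨h, hx⟩)
  have hs_mem : ∀ x ∈ μ, s' x ∈ X := by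
    intro x hx
    by_cases h : x = a - p
    · rw [h, s_eq]; exact ha
    · rw [s_ne x h]
      rcases Finset.mem_insert.mp hx with h' | h'
      · exact absurd h' h
      · exact Finset.mem_of_mem_erase h'
  have hXne : ∀ x ∈ X, x ≠ a - p := fun x hx h => hnot (h ▸ hx)
  have hμne : ∀ x ∈ μ, x ≠ a := fun x hx h => haμ (h ▸ hx)
  have hsr : ∀ x ∈ X, s' (r x) = x := by
    intro x hx
    by_cases h : x = a
    · rw [h, r_eq, s_eq]
    · rw [r_ne x h, s_ne x (hXne x hx)]
  have hrs : ∀ x ∈ μ, r (s' x) = x := by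
    intro x hx
    by_cases h : x = a - p
    · rw [h, s_eq, r_eq]
    · rw [s_ne x h, r_ne x (hμne x hx)]
  have hr_inj : ∀ x ∈ X, ∀ y ∈ X, r x = r y → x = y := by
    intro x hx y hy h
    have := congrArg s' h
    rwa [hsr x hx, hsr y hy] at this
  have hs_inj : ∀ x ∈ μ, ∀ y ∈ μ, s' x = s' y → x = y := by
    intro x hx y hy h
    have := congrArg r h
    rwa [hrs x hx, hrs y hy] at this
  refine Finset.prod_nbij' (i := fun q => srt (r q.1, r q.2)) (j := fun q => srt (s' q.1, s' q.2))
    ?_ ?_ ?_ ?_ ?_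
  · rintro ⟨b, c⟩ hq
    simp only [Finset.mem_filter, Finset.mem_product] at hq
    obtain ⟨⟨hb, hc⟩, hlt⟩ := hq
    show srt (r b, r c) ∈ Finset.filter (fun q => q.2 < q.1) (μ ×ˢ μ)
    have hne : r b ≠ r c := fun h => (Nat.lt_irrefl c) (hr_inj b hb c hc h ▸ hlt)
    by_cases h : r b < r c
    · rw [srt_gt _ _ h]
      simp only [Finset.mem_filter, Finset.mem_product]
      exact ⟨⟨hr_mem c hc, hr_mem b hb⟩, h⟩
    · rw [srt_lt _ _ (by omega)]
      simp only [Finset.mem_filter, Finset.mem_product]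
      exact ⟨⟨hr_mem b hb, hr_mem c hc⟩, by omega⟩
  · rintro ⟨b, c⟩ hq
    simp only [Finset.mem_filter, Finset.mem_product] at hq
    obtain ⟨⟨hb, hc⟩, hlt⟩ := hq
    show srt (s' b, s' c) ∈ Finset.filter (fun q => q.2 < q.1) (X ×ˢ X)
    have hne : s' b ≠ s' c := fun h => (Nat.lt_irrefl c) (hs_inj b hb c hc h ▸ hlt)
    by_cases h : s' b < s' c
    · rw [srt_gt _ _ h]
      simp only [Finset.mem_filter, Finset.mem_product]
      exact ⟨⟨hs_mem c hc, hs_mem b hb⟩, h⟩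
    · rw [srt_lt _ _ (by omega)]
      simp only [Finset.mem_filter, Finset.mem_product]
      exact ⟨⟨hs_mem b hb, hs_mem c hc⟩, by omega⟩
  · rintro ⟨b, c⟩ hq
    simp only [Finset.mem_filter, Finset.mem_product] at hq
    obtain ⟨⟨hb, hc⟩, hlt⟩ := hq
    show srt (s' (srt (r b, r c)).1, s' (srt (r b, r c)).2) = (b, c)
    by_cases h : r b < r c
    · have hin : srt (r b, r c) = (r c, r b) := srt_gt _ _ h
      rw [hin]
      show srt (s' (r c), s' (r b)) = (b, c)
      rw [hsr b hb, hsr c hc]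
      exact srt_gt _ _ hlt
    · have hne : r b ≠ r c := fun h' => (Nat.lt_irrefl c) (hr_inj b hb c hc h' ▸ hlt)
      have hin : srt (r b, r c) = (r b, r c) := srt_lt _ _ (by omega)
      rw [hin]
      show srt (s' (r b), s' (r c)) = (b, c)
      rw [hsr b hb, hsr c hc]
      exact srt_lt _ _ hlt
  · rintro ⟨b, c⟩ hq
    simp only [Finset.mem_filter, Finset.mem_product] at hq
    obtain ⟨⟨hb, hc⟩, hlt⟩ := hq
    show srt (r (srt (s' b, s' c)).1, r (srt (s' b, s' c)).2) = (b, c)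
    by_cases h : s' b < s' c
    · have hin : srt (s' b, s' c) = (s' c, s' b) := srt_gt _ _ h
      rw [hin]
      show srt (r (s' c), r (s' b)) = (b, c)
      rw [hrs b hb, hrs c hc]
      exact srt_gt _ _ hlt
    · have hne : s' b ≠ s' c := fun h' => (Nat.lt_irrefl c) (hs_inj b hb c hc h' ▸ hlt)
      have hin : srt (s' b, s' c) = (s' b, s' c) := srt_lt _ _ (by omega)
      rw [hin]
      show srt (r (s' b), r (s' c)) = (b, c)
      rw [hrs b hb, hrs c hc]
      exact srt_lt _ _ hlt
  · rintro ⟨b, c⟩ hq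
    simp only [Finset.mem_filter, Finset.mem_product] at hq
    obtain ⟨⟨hb, hc⟩, hlt⟩ := hq
    show g p (b + c) * (g p (b - c))⁻¹
      = g p ((srt (r b, r c)).1 + (srt (r b, r c)).2) * (g p ((srt (r b, r c)).1 - (srt (r b, r c)).2))⁻¹
    by_cases hba : b = a
    · have hca : c ≠ a := by omega
      have hcap : c ≠ a - p := hXne c hc
      rw [hba, r_eq, r_ne c hca]
      by_cases h1 : c < a - p
      · rw [srt_lt _ _ h1]
        show g p (a + c) * (g p (a - c))⁻¹ = g p (a - p + c) * (g p (a - p - c))⁻¹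
        have e1 : a - p + c = (a + c) - p := by omega
        have e2 : a - p - c = (a - c) - p := by omega
        rw [e1, e2, g_sub_p p (by omega), g_sub_p p (by omega)]
      · have h1' : a - p < c := by omega
        rw [srt_gt _ _ h1']
        show g p (a + c) * (g p (a - c))⁻¹ = g p (c + (a - p)) * (g p (c - (a - p)))⁻¹
        have e1 : c + (a - p) = (a + c) - p := by omega
        rw [e1, g_sub_p p (by omega)]
        have e2 : (a - c) + (c - (a - p)) = p := by omega
        rw [g_compl p e2]
    · by_cases hca : c = a
      · rw [hca, r_ne b hba, r_eq]
        have hlt' : a - p < b := by omega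
        rw [srt_lt _ _ hlt']
        show g p (b + a) * (g p (b - a))⁻¹ = g p (b + (a - p)) * (g p (b - (a - p)))⁻¹
        have e1 : b + (a - p) = (b + a) - p := by omega
        have e2 : b - (a - p) = (b - a) + p := by omega
        rw [e1, e2, g_sub_p p (by omega), g_add_p]
      · rw [r_ne b hba, r_ne c hca, srt_lt _ _ hlt]


lemma sq_eq [Fact p.Prime] (X : Finset ℕ) (hX : 0 ∉ X) (a : ℕ) (ha : a ∈ X) (hap : p < a)
    (hnot : a - p ∉ X) :
    ((barProd' p X : ℕ) : ZMod p) ^ 2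
      = ((barProd' p (insert (a - p) (X.erase a)) : ℕ) : ZMod p) ^ 2 := by
  have h0μ : 0 ∉ insert (a - p) (X.erase a) := by
    intro h
    rcases Finset.mem_insert.mp h with h | h
    · omega
    · exact hX (Finset.mem_of_mem_erase h)
  rw [main_formula p X hX, main_formula p _ h0μ, W_eq p X a ha hap hnot,
    P_eq p X a ha hap hnot]

end BarAux

theorem stmt1 (p : ℕ) (hp : p.Prime) (hodd : Odd p)
    (X : Finset ℕ) (hX : 0 ∉ X) (a : ℕ) (ha : a ∈ X) (hap : p < a) (hnot : a - p ∉ X) :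
    ∃ ε : ℤ, (ε = 1 ∨ ε = -1) ∧
      (barProd' p X : ℤ) ≡ ε * (barProd' p (insert (a - p) (X.erase a)) : ℤ) [ZMOD p] := by
  haveI : Fact p.Prime := ⟨hp⟩
  set A : ZMod p := ((barProd' p X : ℕ) : ZMod p) with hA
  set B : ZMod p := ((barProd' p (insert (a - p) (X.erase a)) : ℕ) : ZMod p) with hB
  have hsq : A ^ 2 = B ^ 2 := BarAux.sq_eq p X hX a ha hap hnot
  have hz : (A - B) * (A + B) = 0 := by ring_nf; linear_combination hsq
  have key : A = B ∨ A = -B := by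
    rcases mul_eq_zero.mp hz with h | h
    · left; linear_combination h
    · right; linear_combination h
  rcases key with h | h
  · refine ⟨1, Or.inl rfl, ?_⟩
    rw [← ZMod.intCast_eq_intCast_iff]
    push_cast
    simpa using h
  · refine ⟨-1, Or.inr rfl, ?_⟩
    rw [← ZMod.intCast_eq_intCast_iff]
    push_cast
    simpa using h
end

section
/- Let p be an odd prime and let λ be a strict partition having two distinct parts a > b with a + b = p. Let μ be the strict partition whose parts are those of λ with the parts a and b removed (a p-bar removal of type 3). Then there exists a sign ε ∈ {1, −1} such that 2 · h̄_{λ,p'} ≡ ε · h̄_{μ,p'} (mod p). -/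
namespace Stmt3Aux
open Finset

variable (p : ℕ) [hpf : Fact p.Prime]

/-- `x` if `p ∤ x`, else `1`. -/
def ff (x : ℕ) : ZMod p := if p ∣ x then 1 else (x : ZMod p)

lemma ff_ne_zero (x : ℕ) : ff p x ≠ 0 := by
  unfold ff
  split
  · exact one_ne_zero
  · rw [Ne, ZMod.natCast_eq_zero_iff]
    assumption

lemma ff_congr {x y : ℕ} (h : x = y + p) : ff p x = ff p y := by
  subst h
  unfold ff
  have h1 : p ∣ y + p ↔ p ∣ y := ⟨fun h' => (Nat.dvd_add_iff_left dvd_rfl).mpr h',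
    fun h' => Nat.dvd_add h' dvd_rfl⟩
  have h2 : ((y + p : ℕ) : ZMod p) = (y : ZMod p) := by push_cast [ZMod.natCast_self]; ring
  simp only [h1, h2]

lemma cast_barProd (X : Finset ℕ) :
    ((barProd' p X : ℕ) : ZMod p) = ((barLengths X).map (ff p)).prod := by
  unfold barProd'
  generalize barLengths X = B
  induction B using Multiset.induction with
  | empty => simp
  | cons a s ih =>
    rw [Multiset.filter_cons, Multiset.map_cons, Multiset.prod_cons, ← ih]
    by_cases h : p ∣ a
    · simp [ff, h]
    · simp [ff, h]

/-- the factor coming from a pair of rows -/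
noncomputable def hh (c d : ℕ) : ZMod p := if d < c then ff p (c + d) / ff p (c - d) else 1

lemma hh_ne_zero (c d : ℕ) : hh p c d ≠ 0 := by
  unfold hh
  split
  · exact div_ne_zero (ff_ne_zero p _) (ff_ne_zero p _)
  · exact one_ne_zero

lemma hh_of_not_lt {c d : ℕ} (h : ¬ d < c) : hh p c d = 1 := by simp [hh, h]

/-- Row product lemma. -/
lemma row_prod (X : Finset ℕ) (hX : 0 ∉ X) (c : ℕ) :
    (∏ x ∈ ((Finset.Icc 1 c ∪ (X.filter (· < c)).image (fun d => c + d)) \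
      ((X.filter (· < c)).image (fun d => c - d))), ff p x)
    = (∏ i ∈ Finset.Icc 1 c, ff p i) * ∏ d ∈ X, hh p c d := by
  set L := X.filter (· < c) with hL
  have hLmem : ∀ d ∈ L, 1 ≤ d ∧ d < c := by
    intro d hd
    rw [hL, mem_filter] at hd
    refine ⟨?_, hd.2⟩
    rcases Nat.eq_zero_or_pos d with h | h
    · exact absurd (h ▸ hd.1) hX
    · exact h
  have hsubs : L.image (fun d => c - d) ⊆ Finset.Icc 1 c := by
    intro x hx
    rw [mem_image] at hx
    obtain ⟨d, hd, rfl⟩ := hx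
    have := hLmem d hd
    rw [mem_Icc]; omega
  have haddIcc : Disjoint (L.image (fun d => c + d)) (Finset.Icc 1 c) := by
    rw [disjoint_left]
    intro x hx hx'
    rw [mem_image] at hx
    obtain ⟨d, hd, rfl⟩ := hx
    rw [mem_Icc] at hx'
    have := hLmem d hd
    omega
  have haddsubs : Disjoint (L.image (fun d => c + d)) (L.image (fun d => c - d)) :=
    haddIcc.mono_right hsubs
  have hset : (Finset.Icc 1 c ∪ L.image (fun d => c + d)) \ L.image (fun d => c - d)
      = (Finset.Icc 1 c \ L.image (fun d => c - d)) ∪ L.image (fun d => c + d) := by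
    rw [union_sdiff_distrib, sdiff_eq_self_of_disjoint haddsubs]
  rw [hset, prod_union ((haddIcc.mono_right sdiff_subset).symm)]
  -- now: ∏ (Icc \ subs) * ∏ adds = A c * ∏ d ∈ X, hh c d
  have hprodsdiff : (∏ x ∈ Finset.Icc 1 c \ L.image (fun d => c - d), ff p x)
      * (∏ x ∈ L.image (fun d => c - d), ff p x) = ∏ i ∈ Finset.Icc 1 c, ff p i := by
    exact prod_sdiff hsubs
  have hadds : (∏ x ∈ L.image (fun d => c + d), ff p x) = ∏ d ∈ L, ff p (c + d) := by
    refine prod_image ?_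
    intro x hx y hy h
    simp only at h
    omega
  have hsubs' : (∏ x ∈ L.image (fun d => c - d), ff p x) = ∏ d ∈ L, ff p (c - d) := by
    refine prod_image ?_
    intro x hx y hy h
    have h1 := hLmem x hx
    have h2 := hLmem y hy
    simp only at h
    omega
  have hXprod : (∏ d ∈ X, hh p c d) = ∏ d ∈ L, (ff p (c + d) / ff p (c - d)) := by
    rw [hL, prod_filter]
    refine prod_congr rfl fun d _ => ?_
    by_cases h : d < c <;> simp [hh, h]
  have hden : (∏ d ∈ L, ff p (c - d)) ≠ 0 := prod_ne_zero_iff.mpr fun d _ => ff_ne_zero p _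
  rw [hadds, hXprod, prod_div_distrib]
  field_simp
  rw [← hsubs', mul_right_comm, hprodsdiff]
  ring

lemma barLengths_prod (X : Finset ℕ) (hX : 0 ∉ X) :
    ((barLengths X).map (ff p)).prod
    = ∏ c ∈ X, ((∏ i ∈ Finset.Icc 1 c, ff p i) * ∏ d ∈ X, hh p c d) := by
  unfold barLengths
  rw [Multiset.map_bind, Multiset.prod_bind]
  rw [Finset.prod_eq_multiset_prod]
  refine congrArg Multiset.prod (Multiset.map_congr rfl ?_)
  intro c hc
  rw [← Finset.prod_eq_multiset_prod]
  exact row_prod p X hX c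

/-- the combined factor for another part `d` -/
noncomputable def W (a b d : ℕ) : ZMod p := (hh p a d * hh p d a) * (hh p b d * hh p d b)

lemma main_split (X : Finset ℕ) (hX : 0 ∉ X) (a b : ℕ) (ha : a ∈ X) (hb : b ∈ X)
    (hba : b < a) :
    ((barLengths X).map (ff p)).prod
    = ((∏ i ∈ Finset.Icc 1 a, ff p i) * (∏ i ∈ Finset.Icc 1 b, ff p i) * hh p a b)
      * (∏ d ∈ (X.erase a).erase b, W p a b d)
      * ((barLengths ((X.erase a).erase b)).map (ff p)).prod := by
  set Y := (X.erase a).erase b with hY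
  have hbY : b ∉ Y := notMem_erase _ _
  have haY : a ∉ Y := by
    rw [hY]
    intro h
    exact (notMem_erase a X) (mem_of_mem_erase h)
  have hbXa : b ∈ X.erase a := mem_erase.mpr ⟨hba.ne, hb⟩
  have hXa : insert b Y = X.erase a := insert_erase hbXa
  have hXY : X = insert a (insert b Y) := by rw [hXa, insert_erase ha]
  have haY' : a ∉ insert b Y := by
    rw [mem_insert]
    push_neg
    exact ⟨hba.ne', haY⟩
  have hYX : 0 ∉ Y := by
    rw [hY]
    intro h
    exact hX (mem_of_mem_erase (mem_of_mem_erase h))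
  rw [barLengths_prod p X hX, barLengths_prod p Y hYX]
  have inner : ∀ c : ℕ, (∏ d ∈ X, hh p c d) = hh p c a * (hh p c b * ∏ d ∈ Y, hh p c d) := by
    intro c
    rw [hXY, prod_insert haY', prod_insert hbY]
  have outer : ∀ g : ℕ → ZMod p, (∏ c ∈ X, g c) = g a * (g b * ∏ c ∈ Y, g c) := by
    intro g
    rw [hXY, prod_insert haY', prod_insert hbY]
  rw [outer]
  simp only [inner]
  rw [hh_of_not_lt p (lt_irrefl a), hh_of_not_lt p (lt_irrefl b),
    hh_of_not_lt p (not_lt.mpr hba.le)]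
  have hsplit : (∏ c ∈ Y, ((∏ i ∈ Finset.Icc 1 c, ff p i)
        * (hh p c a * (hh p c b * ∏ d ∈ Y, hh p c d))))
      = (∏ c ∈ Y, (hh p c a * hh p c b))
        * ∏ c ∈ Y, ((∏ i ∈ Finset.Icc 1 c, ff p i) * ∏ d ∈ Y, hh p c d) := by
    rw [← prod_mul_distrib]
    exact prod_congr rfl fun c _ => by ring
  rw [hsplit, prod_mul_distrib, prod_mul_distrib]
  unfold W
  rw [prod_mul_distrib, prod_mul_distrib, prod_mul_distrib]
  ring

lemma hh_of_lt {c d : ℕ} (h : d < c) : hh p c d = ff p (c + d) / ff p (c - d) := if_pos h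

lemma ff_of_lt {x : ℕ} (h1 : 0 < x) (h2 : x < p) : ff p x = (x : ZMod p) :=
  if_neg fun hd => absurd (Nat.le_of_dvd h1 hd) (not_le.mpr h2)

lemma cast_ne_zero_of {x : ℕ} (h1 : 0 < x) (h2 : x < p) : (x : ZMod p) ≠ 0 := by
  rw [Ne, ZMod.natCast_eq_zero_iff]
  exact fun hd => absurd (Nat.le_of_dvd h1 hd) (not_le.mpr h2)

lemma W_cases (a b d : ℕ) (hba : b < a) (hb1 : 1 ≤ b) (hsum : a + b = p)
    (hd1 : 1 ≤ d) (hda : d ≠ a) (hdb : d ≠ b) :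
    W p a b d = 1 ∨ W p a b d = -1 := by
  have hab : (a : ZMod p) + b = 0 := by
    rw [← Nat.cast_add, hsum, ZMod.natCast_self]
  rcases lt_trichotomy d b with hcase | hcase | hcase
  · -- d < b : W = 1
    left
    unfold W
    rw [hh_of_lt p (hcase.trans hba), hh_of_lt p hcase,
      hh_of_not_lt p (not_lt.mpr (hcase.trans hba).le), hh_of_not_lt p (not_lt.mpr hcase.le)]
    rw [ff_of_lt p (by omega) (by omega), ff_of_lt p (by omega) (by omega),
      ff_of_lt p (by omega) (by omega), ff_of_lt p (by omega) (by omega)]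
    rw [Nat.cast_add, Nat.cast_add, Nat.cast_sub hcase.le, Nat.cast_sub (hcase.trans hba).le]
    have h1 : (a : ZMod p) - d ≠ 0 := by
      rw [← Nat.cast_sub (hcase.trans hba).le]
      exact cast_ne_zero_of p (by omega) (by omega)
    have h2 : (b : ZMod p) - d ≠ 0 := by
      rw [← Nat.cast_sub hcase.le]
      exact cast_ne_zero_of p (by omega) (by omega)
    field_simp
    linear_combination (2 * (d : ZMod p)) * hab
  · exact absurd hcase hdb
  rcases lt_trichotomy d a with hcase' | hcase' | hcase'
  · -- b < d < a : W = -1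
    right
    unfold W
    rw [hh_of_lt p hcase', hh_of_lt p hcase,
      hh_of_not_lt p (not_lt.mpr hcase'.le), hh_of_not_lt p (not_lt.mpr hcase.le)]
    have e1 : ff p (a + d) = ff p (d - b) := ff_congr p (by omega)
    rw [e1, ff_of_lt p (by omega) (by omega), ff_of_lt p (by omega) (by omega),
      ff_of_lt p (by omega) (by omega)]
    rw [Nat.cast_add, Nat.cast_sub hcase.le, Nat.cast_sub hcase'.le]
    have h1 : (a : ZMod p) - d ≠ 0 := by
      rw [← Nat.cast_sub hcase'.le]
      exact cast_ne_zero_of p (by omega) (by omega)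
    have h2 : (d : ZMod p) - b ≠ 0 := by
      rw [← Nat.cast_sub hcase.le]
      exact cast_ne_zero_of p (by omega) (by omega)
    field_simp
    linear_combination hab
  · exact absurd hcase' hda
  · -- a < d : W = 1
    left
    unfold W
    rw [hh_of_lt p hcase', hh_of_lt p (hba.trans hcase'),
      hh_of_not_lt p (not_lt.mpr hcase'.le), hh_of_not_lt p (not_lt.mpr (hba.trans hcase').le)]
    have e1 : ff p (d + a) = ff p (d - b) := ff_congr p (by omega)
    have e2 : ff p (d + b) = ff p (d - a) := ff_congr p (by omega)
    rw [e1, e2]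
    field_simp [ff_ne_zero]

lemma wilson_chain (b : ℕ) (h1 : 1 ≤ b) (h2 : b < p) :
    (((p - b).factorial : ℕ) : ZMod p) * (((b - 1).factorial : ℕ) : ZMod p) = (-1) ^ b := by
  induction b, h1 using Nat.le_induction with
  | base =>
    simp only [Nat.sub_self, Nat.factorial_zero, Nat.cast_one, mul_one, pow_one]
    exact ZMod.wilsons_lemma p
  | succ n hn ih =>
    have hn2 : n < p := by omega
    have ihn := ih hn2
    have e1 : p - n = (p - (n + 1)) + 1 := by omega
    have e2 : (((p - n).factorial : ℕ) : ZMod p)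
        = ((p - n : ℕ) : ZMod p) * (((p - (n + 1)).factorial : ℕ) : ZMod p) := by
      rw [e1, Nat.factorial_succ]
      push_cast
      ring
    have e3 : ((p - n : ℕ) : ZMod p) = -(n : ZMod p) := by
      have h' : (p - n) + n = p := by omega
      have h'' := congrArg (Nat.cast : ℕ → ZMod p) h'
      push_cast at h''
      rw [ZMod.natCast_self] at h''
      linear_combination h''
    have e4 : ((n.factorial : ℕ) : ZMod p) = (n : ZMod p) * (((n - 1).factorial : ℕ) : ZMod p) := by
      have := Nat.mul_factorial_pred (by omega : n ≠ 0)
      rw [← this]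
      push_cast
      ring
    rw [e2, e3] at ihn
    simp only [Nat.add_sub_cancel]
    rw [e4]
    linear_combination (-1 : ZMod p) * ihn

lemma A_eq (c : ℕ) (hc : c < p) :
    (∏ i ∈ Finset.Icc 1 c, ff p i) = ((c.factorial : ℕ) : ZMod p) := by
  have h1 : (∏ i ∈ Finset.Icc 1 c, ff p i) = ∏ i ∈ Finset.Icc 1 c, (i : ZMod p) := by
    refine prod_congr rfl fun i hi => ?_
    rw [mem_Icc] at hi
    exact ff_of_lt p (by omega) (by omega)
  rw [h1, ← Nat.cast_prod]
  congr 1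
  rw [← Finset.Ico_add_one_right_eq_Icc]
  exact Finset.prod_Ico_id_eq_factorial c

lemma scalar (hodd : Odd p) (a b : ℕ) (hba : b < a) (hb1 : 1 ≤ b) (hsum : a + b = p) :
    2 * (((a.factorial : ℕ) : ZMod p) * ((b.factorial : ℕ) : ZMod p) * hh p a b)
      = (-1) ^ (b + 1) := by
  have hp3 : 3 ≤ p := by
    obtain ⟨k, hk⟩ := hodd
    have := hpf.out.two_le
    omega
  have hhab : hh p a b = 1 / ff p (a - b) := by
    rw [hh_of_lt p hba, hsum]
    unfold ff
    rw [if_pos dvd_rfl]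
  have hffab : ff p (a - b) = -(2 * (b : ZMod p)) := by
    rw [ff_of_lt p (by omega) (by omega), Nat.cast_sub hba.le]
    have h' : (a : ZMod p) + b = 0 := by rw [← Nat.cast_add, hsum, ZMod.natCast_self]
    linear_combination h'
  have hbne : (b : ZMod p) ≠ 0 := cast_ne_zero_of p (by omega) (by omega)
  have h2ne : (2 : ZMod p) ≠ 0 := by
    have : ((2 : ℕ) : ZMod p) ≠ 0 := cast_ne_zero_of p (by omega) (by omega)
    exact_mod_cast this
  have hfa : a = p - b := by omega
  have hwil := wilson_chain p b hb1 (by omega)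
  have hbfac : ((b.factorial : ℕ) : ZMod p) = (b : ZMod p) * (((b - 1).factorial : ℕ) : ZMod p) := by
    have := Nat.mul_factorial_pred (by omega : b ≠ 0)
    rw [← this]
    push_cast
    ring
  rw [hhab, hffab, hfa, hbfac]
  field_simp
  linear_combination (-1 : ZMod p) * hwil

lemma prod_pm (s : Finset ℕ) (g : ℕ → ZMod p) (h : ∀ d ∈ s, g d = 1 ∨ g d = -1) :
    (∏ d ∈ s, g d) = 1 ∨ (∏ d ∈ s, g d) = -1 := by
  induction s using Finset.cons_induction with
  | empty => left; simp
  | cons a s ha ih =>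
    rw [prod_cons]
    rcases h a (mem_cons_self a s) with h1 | h1 <;>
      rcases ih (fun d hd => h d (mem_cons_of_mem hd)) with h2 | h2 <;>
        simp [h1, h2]

end Stmt3Aux

theorem stmt3 (p : ℕ) (hp : p.Prime) (hodd : Odd p)
    (X : Finset ℕ) (hX : 0 ∉ X) (a b : ℕ) (ha : a ∈ X) (hb : b ∈ X) (hba : b < a)
    (hsum : a + b = p) :
    ∃ ε : ℤ, (ε = 1 ∨ ε = -1) ∧
      2 * (barProd' p X : ℤ) ≡ ε * (barProd' p ((X.erase a).erase b) : ℤ) [ZMOD p] := by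
  haveI : Fact p.Prime := ⟨hp⟩
  open Stmt3Aux in
  set Y := (X.erase a).erase b with hY
  have hb1 : 1 ≤ b := by
    rcases Nat.eq_zero_or_pos b with h | h
    · exact absurd (h ▸ hb) hX
    · exact h
  have ha_lt : a < p := by omega
  have hb_lt : b < p := by omega
  -- product of W's is ±1
  have hWpm : (∏ d ∈ Y, Stmt3Aux.W p a b d) = 1 ∨ (∏ d ∈ Y, Stmt3Aux.W p a b d) = -1 := by
    refine Stmt3Aux.prod_pm p Y _ fun d hd => ?_
    have hdY := hd
    rw [hY, Finset.mem_erase, Finset.mem_erase] at hdY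
    obtain ⟨hdb, hda, hdX⟩ := hdY
    have hd1 : 1 ≤ d := by
      rcases Nat.eq_zero_or_pos d with h | h
      · exact absurd (h ▸ hdX) hX
      · exact h
    exact Stmt3Aux.W_cases p a b d hba hb1 hsum hd1 hda hdb
  -- the key identity in ZMod p
  have hmain := Stmt3Aux.main_split p X hX a b ha hb hba
  rw [Stmt3Aux.A_eq p a ha_lt, Stmt3Aux.A_eq p b hb_lt] at hmain
  have hscal := Stmt3Aux.scalar p hodd a b hba hb1 hsum
  have hkey : 2 * ((barLengths X).map (Stmt3Aux.ff p)).prod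
      = ((-1) ^ (b + 1) * ∏ d ∈ Y, Stmt3Aux.W p a b d)
        * ((barLengths Y).map (Stmt3Aux.ff p)).prod := by
    rw [hmain, ← hscal]
    ring
  -- sign
  have hsgn : ((-1 : ZMod p)) ^ (b + 1) = 1 ∨ ((-1 : ZMod p)) ^ (b + 1) = -1 := by
    rcases Nat.even_or_odd (b + 1) with h | h
    · exact Or.inl (Even.neg_one_pow h)
    · exact Or.inr (Odd.neg_one_pow h)
  have hu : ((-1 : ZMod p)) ^ (b + 1) * (∏ d ∈ Y, Stmt3Aux.W p a b d) = 1
      ∨ ((-1 : ZMod p)) ^ (b + 1) * (∏ d ∈ Y, Stmt3Aux.W p a b d) = -1 := by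
    rcases hsgn with h1 | h1 <;> rcases hWpm with h2 | h2 <;> rw [h1, h2] <;> simp
  rcases hu with h | h
  · refine ⟨1, Or.inl rfl, ?_⟩
    rw [← ZMod.intCast_eq_intCast_iff]
    push_cast
    rw [Stmt3Aux.cast_barProd, Stmt3Aux.cast_barProd, hkey, h]
  · refine ⟨-1, Or.inr rfl, ?_⟩
    rw [← ZMod.intCast_eq_intCast_iff]
    push_cast
    rw [Stmt3Aux.cast_barProd, Stmt3Aux.cast_barProd, hkey, h]
end

section
/- Let p be an odd prime, let λ be a strict partition with set of parts X, and let a ∈ X satisfy a > p and a − p ∉ X. Let μ be the strict partition with set of parts (X \ {a}) ∪ {a − p}. Then the product of all mixed bar lengths of λ not divisible by p is congruent modulo p to the product of all mixed bar lengths of μ not divisible by p (with no sign change). -/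
/-- The multiset of mixed bar lengths of a strict partition with set of parts `X`:
the multiset `{b + c : b, c ∈ X, b > c}`. -/
def mixedBarLengths (X : Finset ℕ) : Multiset ℕ :=
  X.val.bind fun a => (X.filter (· < a)).val.map fun b => a + b

/-- The product of all mixed bar lengths of the strict partition with parts `X`
that are not divisible by `p`. -/
def mixedBarProd' (p : ℕ) (X : Finset ℕ) : ℕ :=
  (Multiset.filter (fun l => ¬ p ∣ l) (mixedBarLengths X)).prod

lemma bind_ite (s : Multiset ℕ) (P : ℕ → Prop) [DecidablePred P] (f : ℕ → ℕ) :
    s.bind (fun x => if P x then ({f x} : Multiset ℕ) else 0) = (s.filter P).map f := by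
  induction s using Multiset.induction with
  | empty => simp
  | cons a s ih => by_cases h : P a <;> simp [Multiset.filter_cons, h, ih]

lemma mixedBarLengths_insert (a : ℕ) (E : Finset ℕ) (ha : a ∉ E) :
    mixedBarLengths (insert a E) = mixedBarLengths E + E.val.map (fun b => a + b) := by
  have hval : (insert a E).val = a ::ₘ E.val := Finset.insert_val_of_notMem ha
  unfold mixedBarLengths
  simp only [Finset.filter_val, hval, Multiset.cons_bind, Multiset.filter_cons,
    lt_irrefl, if_neg (lt_irrefl a), Multiset.map_add, if_false, Multiset.map_zero,
    zero_add]
  have h1 : (E.val.bind fun x =>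
      Multiset.map (fun y => x + y) (if a < x then ({a} : Multiset ℕ) else 0) +
        Multiset.map (fun y => x + y) (Multiset.filter (fun y => y < x) E.val))
      = (E.val.bind fun x => if a < x then ({x + a} : Multiset ℕ) else 0)
        + E.val.bind fun x =>
            Multiset.map (fun y => x + y) (Multiset.filter (fun y => y < x) E.val) := by
    rw [← Multiset.bind_add]
    apply Multiset.bind_congr
    intro x _
    split <;> simp
  rw [h1, bind_ite]
  have h2 : Multiset.map (fun x => x + a) (Multiset.filter (fun x => a < x) E.val)
      = Multiset.map (fun x => a + x) (Multiset.filter (fun x => ¬ x < a) E.val) := by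
    rw [Multiset.filter_congr (q := fun x => ¬ x < a) ?_]
    · exact Multiset.map_congr rfl fun x _ => Nat.add_comm x a
    · intro x hx
      have : x ≠ a := fun h => ha (h ▸ hx)
      omega
  rw [h2]
  have h3 : Multiset.map (fun x => a + x) (Multiset.filter (fun x => x < a) E.val) +
      Multiset.map (fun x => a + x) (Multiset.filter (fun x => ¬ x < a) E.val)
      = Multiset.map (fun x => a + x) E.val := by
    rw [← Multiset.map_add, Multiset.filter_add_not]
  rw [← h3, ← add_assoc, add_comm]


theorem stmt4 (p : ℕ) (hp : p.Prime) (hodd : Odd p)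
    (X : Finset ℕ) (hX : 0 ∉ X) (a : ℕ) (ha : a ∈ X) (hap : p < a) (hnot : a - p ∉ X) :
    (mixedBarProd' p X : ℤ) ≡
      (mixedBarProd' p (insert (a - p) (X.erase a)) : ℤ) [ZMOD p] := by
  apply (ZMod.intCast_eq_intCast_iff' _ _ p).mp
  push_cast
  set E := X.erase a with hE
  have haE : a ∉ E := Finset.notMem_erase a X
  have hapE : a - p ∉ E := fun h => hnot (Finset.mem_of_mem_erase h)
  have hXE : X = insert a E := (Finset.insert_erase ha).symm
  unfold mixedBarProd'
  rw [Nat.cast_multiset_prod, Nat.cast_multiset_prod]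
  congr 1
  rw [hXE, mixedBarLengths_insert a E haE, mixedBarLengths_insert (a - p) E hapE,
    Multiset.filter_add, Multiset.filter_add, Multiset.map_add, Multiset.map_add]
  congr 1
  rw [Multiset.filter_map, Multiset.filter_map, Multiset.map_map, Multiset.map_map]
  have hfil : Multiset.filter ((fun l => ¬ p ∣ l) ∘ fun b => a + b) E.val
      = Multiset.filter ((fun l => ¬ p ∣ l) ∘ fun b => a - p + b) E.val := by
    apply Multiset.filter_congr
    intro x _
    simp only [Function.comp]
    have h : a + x = p + (a - p + x) := by omega
    rw [h, Nat.dvd_add_right (dvd_refl p)]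
  rw [hfil]
  apply Multiset.map_congr rfl
  intro x _
  simp only [Function.comp]
  have h : a + x = (a - p + x) + p := by omega
  rw [h]
  push_cast
  rw [ZMod.natCast_self, add_zero]
end

section
/- Let p be an odd prime and let μ be a strict partition to which no p-bar removal of any type applies (that is: μ has no part a with a > p and a − p not a part of μ; p is not a part of μ; and μ has no two distinct parts a, b with a + b = p). Then no bar length of μ is divisible by p; equivalently, h̄_{μ,p'} equals the product of all bar lengths of μ. -/
theorem stmt9 (p : ℕ) (hp : p.Prime) (hodd : Odd p) (X : Finset ℕ) (hX : 0 ∉ X)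
    (h1 : ¬ ∃ a ∈ X, p < a ∧ a - p ∉ X)
    (h2 : p ∉ X)
    (h3 : ¬ ∃ a ∈ X, ∃ b ∈ X, a ≠ b ∧ a + b = p) :
    (∀ l ∈ barLengths X, ¬ p ∣ l) ∧ barProd' p X = (barLengths X).prod := by
  have hp1 : 1 < p := hp.one_lt
  have hp2 : p ≠ 2 := by
    intro h; rw [h] at hodd; exact (by decide : ¬ Odd 2) hodd
  push_neg at h1 h3
  have hpos : ∀ a ∈ X, 0 < a := fun a ha => Nat.pos_of_ne_zero (fun h => hX (h ▸ ha))
  -- descent: from a part we can subtract p repeatedly and stay in X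
  have descend : ∀ k a, a ∈ X → k * p ≤ a → a - k * p ∈ X := by
    intro k
    induction k with
    | zero => intro a ha _; simpa using ha
    | succ k ih =>
      intro a ha hle
      rw [Nat.succ_mul] at hle
      have hc := ih a ha (by omega)
      have hple : p ≤ a - k * p := by omega
      have hcp : p < a - k * p := by
        rcases hple.lt_or_eq with h | h
        · exact h
        · exact absurd (by rwa [← h] at hc) h2
      have := h1 _ hc hcp
      have he : a - k * p - p = a - (k + 1) * p := by rw [Nat.succ_mul]; omega
      rw [Nat.succ_mul]
      rwa [he, Nat.succ_mul] at this
  -- no part is divisible by p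
  have ndvd : ∀ a ∈ X, ¬ p ∣ a := by
    rintro a ha ⟨k, hk⟩
    have hk' : a = k * p := by rw [hk, mul_comm]
    have hk1 : 1 ≤ k := by
      rcases Nat.eq_zero_or_pos k with h | h
      · exfalso; rw [h, zero_mul] at hk'; have := hpos a ha; omega
      · exact h
    have h0 := descend k a ha (by omega)
    rw [show a - k * p = 0 by omega] at h0
    exact hX h0
  -- no two distinct parts have sum divisible by p
  have pair : ∀ n a b, a + b ≤ n → a ∈ X → b ∈ X → a ≠ b → ¬ p ∣ (a + b) := by
    intro n
    induction n with
    | zero => intro a b hab ha _ _ _; have := hpos a ha; omega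
    | succ n ih =>
      have step : ∀ a b, a + b ≤ n + 1 → a ∈ X → b ∈ X → a ≠ b → p ∣ a + b →
          p < a + b → p < a → False := by
        intro a b hab ha hb hne hdvd hlt hpa
        have ha' := h1 a ha hpa
        have hne' : a - p ≠ b := by
          intro h
          have h2b : p ∣ 2 * b := by
            have := Nat.dvd_sub hdvd (dvd_refl p)
            rwa [show a + b - p = 2 * b by omega] at this
          rcases (Nat.Prime.dvd_mul hp).mp h2b with h' | h'
          · have := Nat.le_of_dvd (by norm_num) h'; omega
          · exact ndvd b hb h'
        have hdvd' : p ∣ (a - p) + b := by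
          have := Nat.dvd_sub hdvd (dvd_refl p)
          rwa [show a + b - p = (a - p) + b by omega] at this
        exact ih (a - p) b (by omega) ha' hb hne' hdvd'
      intro a b hab ha hb hne hdvd
      have hs : p ≤ a + b :=
        Nat.le_of_dvd (by have := hpos a ha; omega) hdvd
      rcases hs.lt_or_eq with hlt | heq
      · have hmax : p < a ∨ p < b := by
          by_contra h
          push_neg at h
          obtain ⟨hla, hlb⟩ := h
          have hasp : a ≠ p := fun h => h2 (h ▸ ha)
          have hbsp : b ≠ p := fun h => h2 (h ▸ hb)
          have h2p : a + b < 2 * p := by omega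
          obtain ⟨k, hk⟩ := hdvd
          have hk' : a + b = k * p := by rw [hk, mul_comm]
          rcases k with _ | _ | k
          · omega
          · omega
          · have : 2 * p ≤ (k + 1 + 1) * p := Nat.mul_le_mul_right p (by omega)
            omega
        rcases hmax with hpa | hpb
        · exact step a b hab ha hb hne hdvd hlt hpa
        · exact step b a (by omega) hb ha (Ne.symm hne) (by rwa [add_comm]) (by omega) hpb
      · exact absurd heq.symm (h3 a ha b hb hne)
  have key : ∀ l ∈ barLengths X, ¬ p ∣ l := by
    intro l hl hdvd
    rw [barLengths, Multiset.mem_bind] at hl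
    obtain ⟨a, haX, hl⟩ := hl
    rw [← Finset.mem_def, Finset.mem_sdiff, Finset.mem_union] at hl
    obtain ⟨hin, hout⟩ := hl
    rcases hin with hIcc | himg
    · rw [Finset.mem_Icc] at hIcc
      obtain ⟨k, hk⟩ := hdvd
      have hk' : l = k * p := by rw [hk, mul_comm]
      have hk1 : 1 ≤ k := by
        rcases Nat.eq_zero_or_pos k with h | h
        · exfalso; rw [h, zero_mul] at hk'; omega
        · exact h
      have hb := descend k a haX (by omega)
      apply hout
      rw [Finset.mem_image]
      refine ⟨a - k * p, Finset.mem_filter.mpr ⟨hb, ?_⟩, by omega⟩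
      have hkp1 : 1 ≤ k * p := by omega
      show a - k * p < a
      omega
    · rw [Finset.mem_image] at himg
      obtain ⟨b, hbf, hlb⟩ := himg
      rw [Finset.mem_filter] at hbf
      have hba : b < a := by simpa using hbf.2
      exact pair (a + b) a b le_rfl haX hbf.1 (by omega) (hlb ▸ hdvd)
  refine ⟨key, ?_⟩
  rw [barProd', Multiset.filter_eq_self.mpr key]
end
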